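/- Let I ⊂ (1/2, 1) be an interval, and suppose that for every λ* ∈ I that is a zero of a {0,±1} polynomial with constant term 1, R_2(0, λ*, 2^N) → ∞ faster than 2^{N^{1−ε}} (which holds by the entropy-drop bound). Suppose also such zeros are dense in I. Then there exists an uncountable set E ⊂ I such that for all λ ∈ E and all s > 0, R_2(s, λ, 2^N) ≥ 2^{N^{1−ε}} for infinitely many N. -/

import Mathlib

open Filter

/-- `π_λ^N(ω) = Σ_{n=0}^{N-1} ω_n λ^n`. -/
noncomputable def piN (lam : ℝ) (N : ℕ) (ω : Fin N → Bool) : ℝ :=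
  ∑ n : Fin N, if ω n then lam ^ (n : ℕ) else 0

/-- Pair correlation for the sets `A_N(λ) = (1-λ)·A'_N(λ)`:
`R₂(s,λ,2^N) = 2^{-N} · #{(ω,τ) : ω ≠ τ, |(1-λ)(π_λ^N(ω) - π_λ^N(τ))| ≤ s·2^{-N}}`. -/
noncomputable def R2 (s lam : ℝ) (N : ℕ) : ℝ :=
  ((Finset.univ.filter (fun p : (Fin N → Bool) × (Fin N → Bool) =>
      p.1 ≠ p.2 ∧ |(1 - lam) * (piN lam N p.1 - piN lam N p.2)| ≤ s / 2 ^ N)).card : ℝ) / 2 ^ N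

/-- `λ` is a zero of a `{0,±1}` polynomial with constant term 1. -/
def IsPolZero (lam : ℝ) : Prop :=
  ∃ k : ℕ, ∃ c : ℕ → ℝ, (∀ n, c n ∈ ({-1, 0, 1} : Set ℝ)) ∧
    1 + ∑ n ∈ Finset.Icc 1 k, c n * lam ^ n = 0

/-- Strict-inequality version of `R2`. -/
noncomputable def R2s (s lam : ℝ) (N : ℕ) : ℝ :=
  ((Finset.univ.filter (fun p : (Fin N → Bool) × (Fin N → Bool) =>
      p.1 ≠ p.2 ∧ |(1 - lam) * (piN lam N p.1 - piN lam N p.2)| < s / 2 ^ N)).card : ℝ) / 2 ^ N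

lemma R2s_le_R2 (s lam : ℝ) (N : ℕ) : R2s s lam N ≤ R2 s lam N := by
  have hsub := Finset.monotone_filter_right (Finset.univ : Finset ((Fin N → Bool) × (Fin N → Bool)))
    (p := fun p => p.1 ≠ p.2 ∧ |(1 - lam) * (piN lam N p.1 - piN lam N p.2)| < s / 2 ^ N)
    (q := fun p => p.1 ≠ p.2 ∧ |(1 - lam) * (piN lam N p.1 - piN lam N p.2)| ≤ s / 2 ^ N)
    (fun p _ hp => ⟨hp.1, le_of_lt hp.2⟩)
  unfold R2s R2
  gcongr

lemma R2_mono (s s' lam : ℝ) (N : ℕ) (h : s ≤ s') : R2 s lam N ≤ R2 s' lam N := by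
  have hsub := Finset.monotone_filter_right (Finset.univ : Finset ((Fin N → Bool) × (Fin N → Bool)))
    (p := fun p => p.1 ≠ p.2 ∧ |(1 - lam) * (piN lam N p.1 - piN lam N p.2)| ≤ s / 2 ^ N)
    (q := fun p => p.1 ≠ p.2 ∧ |(1 - lam) * (piN lam N p.1 - piN lam N p.2)| ≤ s' / 2 ^ N)
    (fun p _ hp => ⟨hp.1, hp.2.trans (by gcongr)⟩)
  unfold R2
  gcongr

lemma R2_zero_le_R2s (s lam : ℝ) (hs : 0 < s) (N : ℕ) : R2 0 lam N ≤ R2s s lam N := by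
  have hsub := Finset.monotone_filter_right (Finset.univ : Finset ((Fin N → Bool) × (Fin N → Bool)))
    (p := fun p => p.1 ≠ p.2 ∧ |(1 - lam) * (piN lam N p.1 - piN lam N p.2)| ≤ (0:ℝ) / 2 ^ N)
    (q := fun p => p.1 ≠ p.2 ∧ |(1 - lam) * (piN lam N p.1 - piN lam N p.2)| < s / 2 ^ N)
    (fun p _ hp => ⟨hp.1, by
      have h0 : |(1 - lam) * (piN lam N p.1 - piN lam N p.2)| ≤ 0 := by simpa using hp.2
      exact h0.trans_lt (by positivity)⟩)
  unfold R2s R2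
  gcongr

lemma continuous_piN (N : ℕ) (ω : Fin N → Bool) :
    Continuous (fun lam : ℝ => piN lam N ω) := by
  unfold piN
  refine continuous_finset_sum _ (fun n _ => ?_)
  by_cases h : ω n
  · simp only [h, if_true]; exact continuous_pow _
  · simp only [h, Bool.false_eq_true, if_false]; exact continuous_const

lemma continuous_absdiff (N : ℕ) (p : (Fin N → Bool) × (Fin N → Bool)) :
    Continuous (fun lam : ℝ => |(1 - lam) * (piN lam N p.1 - piN lam N p.2)|) :=
  (((continuous_const.sub continuous_id).mul
    ((continuous_piN N p.1).sub (continuous_piN N p.2))).abs)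

lemma isOpen_R2s_ge (s c : ℝ) (N : ℕ) : IsOpen {lam : ℝ | c ≤ R2s s lam N} := by
  rw [isOpen_iff_mem_nhds]
  intro lam0 hlam0
  set F := Finset.univ.filter (fun p : (Fin N → Bool) × (Fin N → Bool) =>
      p.1 ≠ p.2 ∧ |(1 - lam0) * (piN lam0 N p.1 - piN lam0 N p.2)| < s / 2 ^ N) with hF
  have hopen : IsOpen {lam : ℝ | ∀ p ∈ F, |(1 - lam) * (piN lam N p.1 - piN lam N p.2)| < s / 2 ^ N} := by
    have : {lam : ℝ | ∀ p ∈ F, |(1 - lam) * (piN lam N p.1 - piN lam N p.2)| < s / 2 ^ N} =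
        ⋂ p ∈ F, {lam : ℝ | |(1 - lam) * (piN lam N p.1 - piN lam N p.2)| < s / 2 ^ N} := by
      ext; simp
    rw [this]
    exact isOpen_biInter_finset (fun p _ =>
      isOpen_lt (continuous_absdiff N p) continuous_const)
  refine Filter.mem_of_superset (hopen.mem_nhds ?_) ?_
  · intro p hp
    exact ((Finset.mem_filter.mp hp).2).2
  · intro lam hlam
    have hsub : F ⊆ Finset.univ.filter (fun p : (Fin N → Bool) × (Fin N → Bool) =>
        p.1 ≠ p.2 ∧ |(1 - lam) * (piN lam N p.1 - piN lam N p.2)| < s / 2 ^ N) := by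
      intro p hp
      refine Finset.mem_filter.mpr ⟨Finset.mem_univ _, (Finset.mem_filter.mp hp).2.1, hlam p hp⟩
    have hcard : R2s s lam0 N ≤ R2s s lam N := by
      unfold R2s
      rw [← hF]
      gcongr
    exact hlam0.trans hcard

/-- Nested-interval construction: if the `{0,±1}` polynomial zeros are dense in
`I = [a,b] ⊂ (1/2,1)` and at each such zero `R₂(0,·,2^N)` grows faster than `2^{N^{1-ε}}`,
then there is an uncountable set `E ⊆ I` such that for every `λ ∈ E` and every `s > 0`,
`R₂(s,λ,2^N) ≥ 2^{N^{1-ε}}` for infinitely many `N`. -/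
theorem stmt_18 (a b : ℝ) (ha : 1/2 < a) (hab : a < b) (hb : b < 1)
    (ε : ℝ) (hε0 : 0 < ε) (hε1 : ε < 1)
    (hdense : Set.Icc a b ⊆ closure {lam : ℝ | lam ∈ Set.Icc a b ∧ IsPolZero lam})
    (hgrow : ∀ lam ∈ Set.Icc a b, IsPolZero lam →
      Tendsto (fun N : ℕ => R2 0 lam N / (2 : ℝ) ^ ((N : ℝ) ^ (1 - ε))) atTop atTop) :
    ∃ E ⊆ Set.Icc a b, ¬ E.Countable ∧
      ∀ lam ∈ E, ∀ s > 0, ∃ᶠ N : ℕ in atTop, (2 : ℝ) ^ ((N : ℝ) ^ (1 - ε)) ≤ R2 s lam N := by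
  set bnd : ℕ → ℝ := fun N => (2 : ℝ) ^ ((N : ℝ) ^ (1 - ε)) with hbnd
  set U : ℕ → Set ℝ := fun k =>
    ⋃ N : ℕ, {lam : ℝ | k ≤ N ∧ bnd N ≤ R2s ((1/2 : ℝ) ^ k) lam N} with hU
  have hUopen : ∀ k, IsOpen (U k) := by
    intro k
    apply isOpen_iUnion
    intro N
    by_cases hkN : k ≤ N
    · have he : {lam : ℝ | k ≤ N ∧ bnd N ≤ R2s ((1/2 : ℝ) ^ k) lam N} =
        {lam : ℝ | bnd N ≤ R2s ((1/2 : ℝ) ^ k) lam N} := by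
        ext; simp [hkN]
      rw [he]; exact isOpen_R2s_ge _ _ _
    · have he : {lam : ℝ | k ≤ N ∧ bnd N ≤ R2s ((1/2 : ℝ) ^ k) lam N} = ∅ := by
        ext; simp [hkN]
      rw [he]; exact isOpen_empty
  -- polynomial zeros lie in every U k
  have hzero : ∀ k, ∀ lam ∈ Set.Icc a b, IsPolZero lam → lam ∈ U k := by
    intro k lam hlam hpz
    have h := hgrow lam hlam hpz
    have h1 : ∀ᶠ N : ℕ in atTop, (1 : ℝ) ≤ R2 0 lam N / bnd N := h.eventually_ge_atTop 1
    obtain ⟨N, hN⟩ := ((h1.and (eventually_ge_atTop k)).exists)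
    refine Set.mem_iUnion.mpr ⟨N, hN.2, ?_⟩
    have hbpos : (0 : ℝ) < bnd N := by positivity
    have h2 : bnd N ≤ R2 0 lam N := by
      have := (le_div_iff₀ hbpos).mp hN.1
      linarith
    exact h2.trans (R2_zero_le_R2s _ _ (by positivity) _)
  -- each U k ∪ (Icc a b)ᶜ is open and dense
  have hVres : (⋂ k : ℕ, (U k ∪ (Set.Icc a b)ᶜ)) ∈ residual ℝ := by
    refine countable_iInter_mem.mpr (fun k => residual_of_dense_open
      ((hUopen k).union (isOpen_compl_iff.mpr isClosed_Icc)) ?_)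
    rw [dense_iff_closure_eq, Set.eq_univ_iff_forall]
    intro x
    by_cases hx : x ∈ Set.Ioo a b
    · have hx' : x ∈ Set.Icc a b := Set.Ioo_subset_Icc_self hx
      have hsub : {lam : ℝ | lam ∈ Set.Icc a b ∧ IsPolZero lam} ⊆ U k ∪ (Set.Icc a b)ᶜ :=
        fun y hy => Or.inl (hzero k y hy.1 hy.2)
      exact closure_mono hsub (hdense hx')
    · apply closure_mono Set.subset_union_right
      rw [closure_compl, interior_Icc]
      exact hx
  set W := ⋂ k : ℕ, (U k ∪ (Set.Icc a b)ᶜ) with hW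
  refine ⟨Set.Icc a b ∩ W, Set.inter_subset_left, ?_, ?_⟩
  · -- uncountable
    intro hcnt
    have hmeag : (Set.Icc a b ∩ W)ᶜ ∈ residual ℝ := by
      have he : (Set.Icc a b ∩ W)ᶜ = ⋂ x ∈ (Set.Icc a b ∩ W), ({x}ᶜ : Set ℝ) := by
        ext y
        simp only [Set.mem_compl_iff, Set.mem_iInter, Set.mem_singleton_iff]
        constructor
        · intro hy x hx hxy; exact hy (hxy ▸ hx)
        · intro h hy; exact h y hy rfl
      rw [he]
      exact (countable_bInter_mem hcnt).mpr (fun x _ =>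
        residual_of_dense_open (isOpen_compl_singleton) (dense_compl_singleton x))
    have hd : Dense (W ∩ (Set.Icc a b ∩ W)ᶜ) :=
      dense_of_mem_residual (Filter.inter_mem hVres hmeag)
    obtain ⟨x, hx1, hx2⟩ := hd.exists_mem_open (isOpen_Ioo : IsOpen (Set.Ioo a b))
      ⟨(a+b)/2, by constructor <;> linarith⟩
    exact hx1.2 ⟨Set.Ioo_subset_Icc_self hx2, hx1.1⟩
  · -- the correlation property
    rintro lam ⟨hlamI, hlamW⟩ s hs
    rw [frequently_atTop]
    intro m
    obtain ⟨k0, hk0⟩ := exists_pow_lt_of_lt_one hs (by norm_num : (1/2 : ℝ) < 1)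
    set k := max k0 m with hk
    have hks : (1/2 : ℝ) ^ k ≤ s := by
      calc (1/2 : ℝ) ^ k ≤ (1/2 : ℝ) ^ k0 :=
            pow_le_pow_of_le_one (by norm_num) (by norm_num) (le_max_left _ _)
        _ ≤ s := le_of_lt hk0
    have hlamU : lam ∈ U k := by
      rcases Set.mem_iInter.mp hlamW k with h | h
      · exact h
      · exact absurd hlamI h
    obtain ⟨N, hNmem⟩ := Set.mem_iUnion.mp hlamU
    refine ⟨N, le_trans (le_max_right k0 m) hNmem.1, ?_⟩
    calc bnd N ≤ R2s ((1/2 : ℝ) ^ k) lam N := hNmem.2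
      _ ≤ R2 ((1/2 : ℝ) ^ k) lam N := R2s_le_R2 _ _ _
      _ ≤ R2 s lam N := R2_mono _ _ _ _ hks
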